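/- Fix H ∈ (0,1) and let q(x,t) = 2 ∫₀^∞ ( e^(−x²/(2s²)) / √(2πs²) ) · ( e^(−s²/(2t^(2H))) / √(2π t^(2H)) ) ds for x ∈ ℝ and t > 0, the density of the iterated fractional Brownian motion B¹_{H₁}(|B²_H(t)|^(1/H₁)). Then q satisfies the partial differential equation ∂q/∂t = −H t^(2H−1) ( 2 ∂²q/∂x² + x ∂³q/∂x³ ) for all x ∈ ℝ \ {0} and t > 0. -/

import Mathlib

open MeasureTheory

/-- The density of the iterated fractional Brownian motion
`B¹_{H₁}(|B²_H(t)|^(1/H₁))`: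
`q(x,t) = 2 ∫₀^∞ (e^(−x²/(2s²))/√(2πs²)) (e^(−s²/(2t^(2H)))/√(2πt^(2H))) ds`. -/
noncomputable def qIF (H x t : ℝ) : ℝ :=
  2 * ∫ s in Set.Ioi (0:ℝ),
    (Real.exp (-x ^ 2 / (2 * s ^ 2)) / Real.sqrt (2 * Real.pi * s ^ 2)) *
      (Real.exp (-s ^ 2 / (2 * t ^ (2 * H))) / Real.sqrt (2 * Real.pi * t ^ (2 * H)))

namespace IFBMaux

open Real Filter Set Metric


noncomputable def ker (x a s : ℝ) : ℝ := Real.exp (-x ^ 2 / (2 * s ^ 2) - s ^ 2 / (2 * a))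

lemma ker_pos (x a s : ℝ) : 0 < ker x a s := Real.exp_pos _

lemma ker_eq (x a s : ℝ) :
    ker x a s = Real.exp (-x ^ 2 / (2 * s ^ 2)) * Real.exp (-s ^ 2 / (2 * a)) := by
  rw [ker, ← Real.exp_add]; ring_nf

lemma exp_neg_le (k : ℕ) {y : ℝ} (hy : 0 < y) :
    Real.exp (-y) ≤ (k.factorial : ℝ) / y ^ k := by
  have h1 : y ^ k / (k.factorial : ℝ) ≤ Real.exp y :=
    Real.pow_div_factorial_le_exp (x := y) hy.le k
  have h2 : (0:ℝ) < y ^ k / (k.factorial : ℝ) := by positivity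
  rw [Real.exp_neg]
  calc (Real.exp y)⁻¹ ≤ (y ^ k / (k.factorial : ℝ))⁻¹ := inv_anti₀ h2 h1
    _ = (k.factorial : ℝ) / y ^ k := by rw [inv_div]

lemma ker_abs_bound (x a : ℝ) (hx : x ≠ 0) (ha : 0 < a) (n : ℤ) :
    ∃ C : ℝ, ∀ s ∈ Ioi (0:ℝ), |s ^ n * ker x a s| ≤ C * Real.exp (-(1/(4*a)) * s ^ 2) := by
  set k := n.natAbs with hk
  refine ⟨(k.factorial : ℝ) * (2/x^2)^k + (k.factorial : ℝ) * (4*a)^k, ?_⟩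
  intro s hs
  rw [mem_Ioi] at hs
  have hs0 : s ≠ 0 := hs.ne'
  have hx2 : (0:ℝ) < x ^ 2 := by positivity
  have hker : ker x a s
      = Real.exp (-x^2/(2*s^2)) * Real.exp (-(1/(4*a)) * s^2) * Real.exp (-(1/(4*a)) * s^2) := by
    rw [ker, ← Real.exp_add, ← Real.exp_add]
    congr 1
    field_simp
    ring
  have habs : |s ^ n * ker x a s| = s ^ n * ker x a s := by
    refine abs_of_nonneg ?_
    have := (ker_pos x a s).le
    positivity
  rw [habs, hker]
  have key : s ^ n * Real.exp (-x^2/(2*s^2)) * Real.exp (-(1/(4*a)) * s^2)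
      ≤ (k.factorial : ℝ) * (2/x^2)^k + (k.factorial : ℝ) * (4*a)^k := by
    rcases le_or_gt s 1 with hs1 | hs1
    · -- small s
      have b1 : s ^ n ≤ s ^ (-(k:ℤ)) := by
        apply zpow_le_zpow_right_of_le_one₀ hs hs1
        omega
      have b2 : Real.exp (-x^2/(2*s^2)) ≤ (k.factorial : ℝ) / (x^2/(2*s^2))^k := by
        rw [neg_div]
        exact exp_neg_le k (by positivity)
      have hq : (0:ℝ) < 1/(4*a) := by positivity
      have b3 : Real.exp (-(1/(4*a)) * s^2) ≤ 1 :=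
        Real.exp_le_one_iff.2 (by nlinarith [sq_nonneg s])
      calc s ^ n * Real.exp (-x^2/(2*s^2)) * Real.exp (-(1/(4*a)) * s^2)
          ≤ s ^ (-(k:ℤ)) * ((k.factorial : ℝ) / (x^2/(2*s^2))^k) * 1 := by
            gcongr <;> first
              | exact b1 | exact b2 | exact b3 | exact (Real.exp_pos _).le
              | exact pow_le_one₀ hs.le hs1
              | (rw [div_le_one (by positivity)]; exact one_le_pow₀ hs1.le)
              | positivity
          _ = (k.factorial : ℝ) * (2/x^2)^k * s ^ k := by
            rw [zpow_neg, zpow_natCast]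
            simp only [div_pow, mul_pow]
            field_simp
            ring
          _ ≤ (k.factorial : ℝ) * (2/x^2)^k * 1 := by
            gcongr <;> first
              | exact b1 | exact b2 | exact b3 | exact (Real.exp_pos _).le
              | exact pow_le_one₀ hs.le hs1
              | (rw [div_le_one (by positivity)]; exact one_le_pow₀ hs1.le)
              | positivity
          _ ≤ _ := by
            have : (0:ℝ) ≤ (k.factorial : ℝ) * (4*a)^k := by positivity
            linarith
    · -- large s
      have b1 : s ^ n ≤ s ^ (k:ℤ) := by
        apply zpow_le_zpow_right₀ hs1.le
        exact Int.le_natAbs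
      have b2 : Real.exp (-x^2/(2*s^2)) ≤ 1 := by
        have hq : (0:ℝ) < x^2/(2*s^2) := by positivity
        rw [neg_div]
        exact Real.exp_le_one_iff.2 (by linarith)
      have b3 : Real.exp (-(1/(4*a)) * s^2) ≤ (k.factorial : ℝ) / ((1/(4*a)) * s^2)^k := by
        rw [show -(1/(4*a)) * s^2 = -((1/(4*a)) * s^2) by ring]
        exact exp_neg_le k (by positivity)
      calc s ^ n * Real.exp (-x^2/(2*s^2)) * Real.exp (-(1/(4*a)) * s^2)
          ≤ s ^ (k:ℤ) * 1 * ((k.factorial : ℝ) / ((1/(4*a)) * s^2)^k) := by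
            gcongr <;> first
              | exact b1 | exact b2 | exact b3 | exact (Real.exp_pos _).le
              | exact pow_le_one₀ hs.le hs1
              | (rw [div_le_one (by positivity)]; exact one_le_pow₀ hs1.le)
              | positivity
          _ = (k.factorial : ℝ) * (4*a)^k * (1/s^k) := by
            rw [zpow_natCast]
            simp only [div_pow, mul_pow]
            field_simp
            ring
          _ ≤ (k.factorial : ℝ) * (4*a)^k * 1 := by
            gcongr <;> first
              | exact b1 | exact b2 | exact b3 | exact (Real.exp_pos _).le
              | exact pow_le_one₀ hs.le hs1
              | (rw [div_le_one (by positivity)]; exact one_le_pow₀ hs1.le)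
              | positivity
          _ ≤ _ := by
            have : (0:ℝ) ≤ (k.factorial : ℝ) * (2/x^2)^k := by positivity
            linarith
  calc s ^ n * (Real.exp (-x^2/(2*s^2)) * Real.exp (-(1/(4*a)) * s^2) * Real.exp (-(1/(4*a)) * s^2))
      = (s ^ n * Real.exp (-x^2/(2*s^2)) * Real.exp (-(1/(4*a)) * s^2)) * Real.exp (-(1/(4*a)) * s^2) := by ring
    _ ≤ _ := by
        apply mul_le_mul_of_nonneg_right key (Real.exp_pos _).le

lemma ker_le_ker_left {y ξ : ℝ} (h : y ^ 2 ≤ ξ ^ 2) (a : ℝ) {s : ℝ} (hs : 0 < s) :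
    ker ξ a s ≤ ker y a s := by
  apply Real.exp_le_exp.2
  have h2 : -ξ ^ 2 / (2 * s ^ 2) ≤ -y ^ 2 / (2 * s ^ 2) :=
    div_le_div_of_nonneg_right (by linarith) (by positivity) |>.trans_eq rfl
  linarith


lemma ker_le_ker_a (x : ℝ) {A B : ℝ} (hA : 0 < A) (hAB : A ≤ B) {s : ℝ} (hs : 0 ≤ s) :
    ker x A s ≤ ker x B s := by
  apply Real.exp_le_exp.2
  have hB : 0 < B := hA.trans_le hAB
  have h2 : s ^ 2 / (2 * B) ≤ s ^ 2 / (2 * A) := by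
    apply div_le_div_of_nonneg_left (by positivity) (by positivity) (by linarith)
  linarith [h2]


lemma ker_continuousOn (x a : ℝ) (n : ℤ) :
    ContinuousOn (fun s => s ^ n * ker x a s) (Ioi (0:ℝ)) := by
  intro s hs
  have hs0 : s ≠ 0 := (mem_Ioi.1 hs).ne'
  apply ContinuousAt.continuousWithinAt
  apply ContinuousAt.mul
  · exact continuousAt_zpow₀ _ _ (Or.inl hs0)
  · apply Real.continuous_exp.continuousAt.comp
    apply ContinuousAt.sub
    · exact continuousAt_const.div (by fun_prop) (by positivity)
    · fun_prop


lemma ker_aesm (x a : ℝ) (n : ℤ) :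
    AEStronglyMeasurable (fun s => s ^ n * ker x a s) (volume.restrict (Ioi (0:ℝ))) :=
  (ker_continuousOn x a n).aestronglyMeasurable measurableSet_Ioi


lemma ker_integrableOn (x a : ℝ) (hx : x ≠ 0) (ha : 0 < a) (n : ℤ) :
    IntegrableOn (fun s => s ^ n * ker x a s) (Ioi (0:ℝ)) := by
  obtain ⟨C, hC⟩ := ker_abs_bound x a hx ha n
  have hint : IntegrableOn (fun s => C * Real.exp (-(1/(4*a)) * s ^ 2)) (Ioi (0:ℝ)) :=
    ((integrable_exp_neg_mul_sq (by positivity : (0:ℝ) < 1/(4*a))).const_mul C).integrableOn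
  refine Integrable.mono hint (ker_aesm x a n) ?_
  apply (ae_restrict_iff' measurableSet_Ioi).2
  filter_upwards with s hs
  rw [Real.norm_eq_abs, Real.norm_eq_abs]
  exact (hC s hs).trans (le_abs_self _)


lemma tendsto_zpow_nhdsWithin (m : ℤ) (hm : 1 ≤ m) :
    Tendsto (fun s : ℝ => s ^ m) (nhdsWithin 0 (Ioi 0)) (nhds 0) := by
  have h : Tendsto (fun s : ℝ => s ^ m.toNat) (nhdsWithin 0 (Ioi 0)) (nhds 0) := by
    have := (continuous_pow m.toNat).tendsto (0:ℝ)
    rw [zero_pow (by omega : m.toNat ≠ 0)] at this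
    exact this.mono_left nhdsWithin_le_nhds
  apply h.congr'
  filter_upwards [self_mem_nhdsWithin] with s hs
  rw [← zpow_natCast, Int.toNat_of_nonneg (by omega)]


lemma ker_tendsto_zero (x a : ℝ) (hx : x ≠ 0) (ha : 0 < a) (n : ℤ) :
    Tendsto (fun s => s ^ n * ker x a s) (nhdsWithin 0 (Ioi 0)) (nhds 0) := by
  set k := n.natAbs + 1 with hkdef
  have hx2 : (0:ℝ) < x ^ 2 := by positivity
  apply squeeze_zero_norm' (a := fun s => ((k.factorial : ℝ) * (2/x^2)^k) * s ^ (n + 2*k))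
  · filter_upwards [self_mem_nhdsWithin] with s hs
    rw [mem_Ioi] at hs
    have hs0 : s ≠ 0 := hs.ne'
    have b2 : Real.exp (-x^2/(2*s^2)) ≤ (k.factorial : ℝ) / (x^2/(2*s^2))^k := by
      rw [neg_div]; exact exp_neg_le k (by positivity)
    have b3 : Real.exp (-s^2/(2*a)) ≤ 1 := by
      have : (0:ℝ) ≤ s^2/(2*a) := by positivity
      rw [neg_div]; exact Real.exp_le_one_iff.2 (by linarith)
    have hnorm : ‖s ^ n * ker x a s‖ = s ^ n * (Real.exp (-x^2/(2*s^2)) * Real.exp (-s^2/(2*a))) := by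
      rw [Real.norm_eq_abs, ker_eq, abs_of_nonneg]
      have e1 := (Real.exp_pos (-x^2/(2*s^2))).le
      have e2 := (Real.exp_pos (-s^2/(2*a))).le
      positivity
    rw [hnorm]
    calc s ^ n * (Real.exp (-x^2/(2*s^2)) * Real.exp (-s^2/(2*a)))
        ≤ s ^ n * (((k.factorial : ℝ) / (x^2/(2*s^2))^k) * 1) := by
          gcongr <;> first
            | exact b2 | exact b3 | positivity | exact (Real.exp_pos _).le
      _ = ((k.factorial : ℝ) * (2/x^2)^k) * s ^ (n + 2*k) := by
          rw [zpow_add₀ hs0, show ((2*k : ℤ)) = ((2*k : ℕ) : ℤ) by push_cast; ring,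
            zpow_natCast]
          simp only [div_pow, mul_pow]
          field_simp
          ring
  · have := tendsto_zpow_nhdsWithin (n + 2*k) (by omega)
    have h2 := this.const_mul ((k.factorial : ℝ) * (2/x^2)^k)
    simpa using h2


lemma ker_tendsto_atTop (x a : ℝ) (ha : 0 < a) (n : ℤ) :
    Tendsto (fun s => s ^ n * ker x a s) atTop (nhds 0) := by
  set k := n.natAbs + 1 with hkdef
  apply squeeze_zero_norm' (a := fun s => ((k.factorial : ℝ) * (2*a)^k) * s ^ (n - 2*k))
  · filter_upwards [eventually_gt_atTop (0:ℝ)] with s hs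
    have hs0 : s ≠ 0 := hs.ne'
    have b2 : Real.exp (-x^2/(2*s^2)) ≤ 1 := by
      have : (0:ℝ) ≤ x^2/(2*s^2) := by positivity
      rw [neg_div]; exact Real.exp_le_one_iff.2 (by linarith)
    have b3 : Real.exp (-s^2/(2*a)) ≤ (k.factorial : ℝ) / (s^2/(2*a))^k := by
      rw [neg_div]; exact exp_neg_le k (by positivity)
    have hnorm : ‖s ^ n * ker x a s‖ = s ^ n * (Real.exp (-x^2/(2*s^2)) * Real.exp (-s^2/(2*a))) := by
      rw [Real.norm_eq_abs, ker_eq, abs_of_nonneg]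
      have e1 := (Real.exp_pos (-x^2/(2*s^2))).le
      have e2 := (Real.exp_pos (-s^2/(2*a))).le
      positivity
    rw [hnorm]
    calc s ^ n * (Real.exp (-x^2/(2*s^2)) * Real.exp (-s^2/(2*a)))
        ≤ s ^ n * (1 * ((k.factorial : ℝ) / (s^2/(2*a))^k)) := by
          gcongr <;> first
            | exact b2 | exact b3 | positivity | exact (Real.exp_pos _).le
      _ = ((k.factorial : ℝ) * (2*a)^k) * s ^ (n - 2*k) := by
          rw [zpow_sub₀ hs0, show ((2*k : ℤ)) = ((2*k : ℕ) : ℤ) by push_cast; ring,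
            zpow_natCast]
          simp only [div_pow, mul_pow]
          field_simp
          ring
  · have h1 : Tendsto (fun s : ℝ => s ^ (n - 2*k)) atTop (nhds 0) :=
      tendsto_zpow_atTop_zero (by omega)
    simpa using h1.const_mul ((k.factorial : ℝ) * (2*a)^k)


noncomputable def J (x a : ℝ) (n : ℤ) : ℝ := ∫ s in Ioi (0:ℝ), s ^ n * ker x a s


lemma hasDerivAt_ker_x {s : ℝ} (hs : 0 < s) (a : ℝ) (n : ℤ) (ξ : ℝ) :
    HasDerivAt (fun y => s ^ n * ker y a s) (-ξ * (s ^ (n-2) * ker ξ a s)) ξ := by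
  have hs0 : s ≠ 0 := hs.ne'
  have h1 : HasDerivAt (fun y : ℝ => -y ^ 2 / (2 * s ^ 2) - s ^ 2 / (2 * a))
      (-(2 * ξ) / (2 * s ^ 2)) ξ := by
    have := (((hasDerivAt_pow 2 ξ).neg).div_const (2 * s ^ 2)).sub_const (s ^ 2 / (2 * a))
    simpa using this
  have h2 := (h1.exp).const_mul ((s:ℝ) ^ n)
  have heq : s ^ n * (Real.exp (-ξ ^ 2 / (2 * s ^ 2) - s ^ 2 / (2 * a)) * (-(2 * ξ) / (2 * s ^ 2)))
      = -ξ * (s ^ (n-2) * ker ξ a s) := by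
    rw [ker, zpow_sub₀ hs0, show ((2:ℤ)) = ((2:ℕ):ℤ) by norm_num, zpow_natCast]
    field_simp
  exact heq ▸ h2


lemma hasDerivAt_J_x (a : ℝ) (ha : 0 < a) (n : ℤ) (x : ℝ) (hx : x ≠ 0) :
    HasDerivAt (fun ξ => J ξ a n) (-x * J x a (n-2)) x := by
  have hx2 : x / 2 ≠ 0 := by simpa using hx
  have hxpos : 0 < |x| / 2 := by positivity
  have key := hasDerivAt_integral_of_dominated_loc_of_deriv_le
    (μ := volume.restrict (Ioi (0:ℝ))) (x₀ := x) (s := Metric.ball x (|x| / 2))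
    (F := fun ξ s => s ^ n * ker ξ a s)
    (F' := fun ξ s => -ξ * (s ^ (n-2) * ker ξ a s))
    (bound := fun s => (2 * |x|) * |s ^ (n-2) * ker (x/2) a s|)
    (Metric.ball_mem_nhds x hxpos)
    (Eventually.of_forall fun ξ => ker_aesm ξ a n)
    (ker_integrableOn x a hx ha n)
    (((ker_aesm x a (n-2)).const_mul (-x)).congr ?_)
    ?_
    (((ker_integrableOn (x/2) a hx2 ha (n-2)).abs).const_mul (2 * |x|))
    ?_
  · have h2 := key.2
    have : ∫ s in Ioi (0:ℝ), -x * (s ^ (n-2) * ker x a s) = -x * J x a (n-2) := by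
      rw [J, ← integral_const_mul]
    rwa [this] at h2
  · filter_upwards with s
    ring
  · apply (ae_restrict_iff' measurableSet_Ioi).2
    filter_upwards with s hs
    intro ξ hξ
    rw [mem_ball, Real.dist_eq] at hξ
    have hsp : (0:ℝ) < s := hs
    have e1 : |x| - |ξ| ≤ |ξ - x| := by
      have := abs_sub_abs_le_abs_sub x ξ
      rw [abs_sub_comm x ξ] at this
      exact this
    have e2 : |ξ| - |x| ≤ |ξ - x| := abs_sub_abs_le_abs_sub ξ x
    have h2 : |x|/2 ≤ |ξ| := by linarith
    have hξ2 : |ξ| ≤ 2 * |x| := by linarith [abs_nonneg x]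
    have hxi : (x/2)^2 ≤ ξ^2 := by nlinarith [sq_abs x, sq_abs ξ, abs_nonneg x]
    have hk := ker_le_ker_left hxi a hsp
    rw [Real.norm_eq_abs, abs_mul, abs_neg, abs_mul]
    calc |ξ| * (|s ^ (n-2)| * |ker ξ a s|)
        ≤ (2*|x|) * (|s ^ (n-2)| * |ker (x/2) a s|) := by
          rw [abs_of_pos (ker_pos ξ a s), abs_of_pos (ker_pos (x/2) a s)]
          gcongr <;> first
            | exact hξ2 | exact hk | positivity
            | exact mul_nonneg (abs_nonneg _) (ker_pos ξ a s).le
      _ = 2 * |x| * |s ^ (n-2) * ker (x/2) a s| := by rw [abs_mul]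
  · apply (ae_restrict_iff' measurableSet_Ioi).2
    filter_upwards with s hs
    intro ξ hξ
    exact hasDerivAt_ker_x hs a n ξ



lemma hasDerivAt_ker_a {s : ℝ} (hs : 0 < s) {A : ℝ} (hA : 0 < A) (n : ℤ) (x : ℝ) :
    HasDerivAt (fun B => s ^ n * ker x B s) (s ^ 2 / (2 * A ^ 2) * (s ^ n * ker x A s)) A := by
  have hs0 : s ≠ 0 := hs.ne'
  have h0 : HasDerivAt (fun B : ℝ => B⁻¹) (-(A ^ 2)⁻¹) A := by
    simpa using hasDerivAt_inv hA.ne'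
  have h1 : HasDerivAt (fun B : ℝ => -x ^ 2 / (2 * s ^ 2) - s ^ 2 / 2 * B⁻¹)
      (-(s ^ 2 / 2 * -(A ^ 2)⁻¹)) A := by
    simpa using (h0.const_mul (s ^ 2 / 2)).const_sub (-x ^ 2 / (2 * s ^ 2))
  have hfun : (fun B : ℝ => -x ^ 2 / (2 * s ^ 2) - s ^ 2 / 2 * B⁻¹)
      = fun B : ℝ => -x ^ 2 / (2 * s ^ 2) - s ^ 2 / (2 * B) := by
    funext B
    rw [div_eq_mul_inv (s^2) (2*B), mul_inv]
    ring
  rw [hfun] at h1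
  have h2 := (h1.exp).const_mul ((s:ℝ) ^ n)
  have heq : s ^ n * (Real.exp (-x ^ 2 / (2 * s ^ 2) - s ^ 2 / (2 * A)) * (-(s ^ 2 / 2 * -(A ^ 2)⁻¹)))
      = s ^ 2 / (2 * A ^ 2) * (s ^ n * ker x A s) := by
    rw [ker]
    field_simp
  exact heq ▸ h2


lemma hasDerivAt_J_a (x : ℝ) (hx : x ≠ 0) (n : ℤ) (a : ℝ) (ha : 0 < a) :
    HasDerivAt (fun A => J x A n) ((2 * a ^ 2)⁻¹ * J x a (n+2)) a := by
  have hapos : 0 < a / 2 := by positivity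
  have key := hasDerivAt_integral_of_dominated_loc_of_deriv_le
    (μ := volume.restrict (Ioi (0:ℝ))) (x₀ := a) (s := Metric.ball a (a / 2))
    (F := fun A s => s ^ n * ker x A s)
    (F' := fun A s => s ^ 2 / (2 * A ^ 2) * (s ^ n * ker x A s))
    (bound := fun s => (2 / a ^ 2) * |s ^ (n+2) * ker x (2 * a) s|)
    (Metric.ball_mem_nhds a hapos)
    (Eventually.of_forall fun A => ker_aesm x A n)
    (ker_integrableOn x a hx ha n)
    ?_
    ?_
    (((ker_integrableOn x (2*a) hx (by positivity) (n+2)).abs).const_mul (2 / a ^ 2))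
    ?_
  · have h2 := key.2
    have : (∫ s in Ioi (0:ℝ), s ^ 2 / (2 * a ^ 2) * (s ^ n * ker x a s))
        = (2 * a ^ 2)⁻¹ * J x a (n+2) := by
      rw [J, ← integral_const_mul]
      apply setIntegral_congr_fun measurableSet_Ioi
      intro s hs
      have hs0 : (s:ℝ) ≠ 0 := (mem_Ioi.1 hs).ne'
      dsimp only
      rw [zpow_add₀ hs0, show ((2:ℤ)) = ((2:ℕ):ℤ) by norm_num, zpow_natCast]
      field_simp
    rwa [this] at h2
  · -- measurability of F' a
    apply AEStronglyMeasurable.congr ((ker_aesm x a (n+2)).const_mul ((2 * a ^ 2)⁻¹))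
    apply (ae_restrict_iff' measurableSet_Ioi).2
    filter_upwards with s hs
    have hs0 : (s:ℝ) ≠ 0 := (mem_Ioi.1 hs).ne'
    rw [zpow_add₀ hs0, show ((2:ℤ)) = ((2:ℕ):ℤ) by norm_num, zpow_natCast]
    field_simp
  · -- bound
    apply (ae_restrict_iff' measurableSet_Ioi).2
    filter_upwards with s hs
    intro A hA
    rw [mem_ball, Real.dist_eq] at hA
    have hA1 : a / 2 < A := by
      have := abs_lt.1 hA
      linarith [this.1]
    have hA2 : A ≤ 2 * a := by
      have := abs_lt.1 hA
      linarith [this.2]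
    have hApos : 0 < A := lt_trans hapos hA1
    have hsp : (0:ℝ) < s := hs
    have hk : ker x A s ≤ ker x (2*a) s := ker_le_ker_a x hApos hA2 hsp.le
    have hcoef : s ^ 2 / (2 * A ^ 2) ≤ 2 * s ^ 2 / a ^ 2 := by
      have h1 : a ^ 2 / 4 ≤ A ^ 2 := by nlinarith
      rw [div_le_div_iff₀ (by positivity) (by positivity)]
      nlinarith [sq_nonneg s]
    rw [Real.norm_eq_abs, abs_mul]
    have habs1 : |s ^ 2 / (2 * A ^ 2)| = s ^ 2 / (2 * A ^ 2) := abs_of_nonneg (by positivity)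
    have habs2 : |s ^ n * ker x A s| = s ^ n * ker x A s := by
      refine abs_of_nonneg ?_
      have := (ker_pos x A s).le
      positivity
    rw [habs1, habs2]
    have hzp : (0:ℝ) < s ^ n := zpow_pos hsp n
    have hker2 : (0:ℝ) ≤ s ^ (n+2) * ker x (2*a) s := by
      have := (ker_pos x (2*a) s).le
      positivity
    calc s ^ 2 / (2 * A ^ 2) * (s ^ n * ker x A s)
        ≤ 2 * s ^ 2 / a ^ 2 * (s ^ n * ker x (2*a) s) := by
          apply mul_le_mul hcoef ?_ ?_ (by positivity)
          · exact mul_le_mul_of_nonneg_left hk hzp.le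
          · have := (ker_pos x A s).le
            positivity
      _ = (2 / a ^ 2) * |s ^ (n+2) * ker x (2*a) s| := by
          rw [abs_of_nonneg hker2]
          rw [zpow_add₀ hsp.ne', show ((2:ℤ)) = ((2:ℕ):ℤ) by norm_num, zpow_natCast]
          ring
  · -- differentiability
    apply (ae_restrict_iff' measurableSet_Ioi).2
    filter_upwards with s hs
    intro A hA
    rw [mem_ball, Real.dist_eq] at hA
    have hApos : 0 < A := by
      have := abs_lt.1 hA
      linarith [this.1]
    exact hasDerivAt_ker_a hs hApos n x


lemma parts (x a : ℝ) (hx : x ≠ 0) (ha : 0 < a) :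
    (1/a^2) * J x a 1 - (1/a) * J x a (-1) - 2 * J x a (-3)
      + 5*x^2 * J x a (-5) - x^4 * J x a (-7) = 0 := by
  set h : ℝ → ℝ := fun s => ker x a s * (s⁻¹*s⁻¹ - x^2*(s⁻¹*s⁻¹*s⁻¹*s⁻¹) - s*s⁻¹/a) with hdef
  set D : ℝ → ℝ := fun s => (1/a^2)*(s^(1:ℤ) * ker x a s) - (1/a)*(s^(-1:ℤ) * ker x a s)
      - 2*(s^(-3:ℤ) * ker x a s) + 5*x^2*(s^(-5:ℤ) * ker x a s)
      - x^4*(s^(-7:ℤ) * ker x a s) with hDdef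
  have h0 : h 0 = 0 := by simp [hdef]
  -- derivative of h on Ioi 0
  have hderiv : ∀ s ∈ Ioi (0:ℝ), HasDerivAt h (D s) s := by
    intro s hs
    have hsp : (0:ℝ) < s := hs
    have hs0 : s ≠ 0 := hsp.ne'
    -- the clean zpow version
    have t1 : HasDerivAt (fun σ : ℝ => -x^2/2 * σ^(-2:ℤ) - σ^2/(2*a))
        (-x^2/2 * ((-2) * s^(-3:ℤ)) - 2*s/(2*a)) s := by
      have i1 : HasDerivAt (fun σ : ℝ => σ^(-2:ℤ)) ((-2 : ℤ) * s^(-3:ℤ)) s := by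
        simpa using hasDerivAt_zpow (-2) s (Or.inl hs0)
      have i2 := i1.const_mul (-x^2/2)
      have i3 : HasDerivAt (fun σ : ℝ => σ^2/(2*a)) (2*s/(2*a)) s := by
        simpa using (hasDerivAt_pow 2 s).div_const (2*a)
      refine (i2.sub i3).congr_deriv ?_; push_cast; ring
    have t2 : HasDerivAt (fun σ : ℝ => σ^(-2:ℤ) - x^2*σ^(-4:ℤ) - 1/a)
        ((-2)*s^(-3:ℤ) - x^2*((-4)*s^(-5:ℤ))) s := by
      have i1 : HasDerivAt (fun σ : ℝ => σ^(-2:ℤ)) ((-2 : ℤ) * s^(-3:ℤ)) s := by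
        simpa using hasDerivAt_zpow (-2) s (Or.inl hs0)
      have i2 : HasDerivAt (fun σ : ℝ => σ^(-4:ℤ)) ((-4 : ℤ) * s^(-5:ℤ)) s := by
        simpa using hasDerivAt_zpow (-4) s (Or.inl hs0)
      simpa using (i1.sub (i2.const_mul (x^2))).sub_const (1/a)
    have t3 := (t1.exp).mul t2
    -- transfer to h via local equality
    have hloc : (fun σ : ℝ => Real.exp (-x^2/2 * σ^(-2:ℤ) - σ^2/(2*a))
        * (σ^(-2:ℤ) - x^2*σ^(-4:ℤ) - 1/a)) =ᶠ[nhds s] h := by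
      filter_upwards [isOpen_ne.mem_nhds hs0] with σ hσ
      have hσ0 : σ ≠ 0 := hσ
      rw [hdef]
      dsimp only
      rw [ker]
      congr 1
      · congr 2
        rw [zpow_neg, show ((2:ℤ)) = ((2:ℕ):ℤ) by norm_num, zpow_natCast]
        field_simp
      · rw [zpow_neg, zpow_neg, show ((2:ℤ)) = ((2:ℕ):ℤ) by norm_num,
          show ((4:ℤ)) = ((4:ℕ):ℤ) by norm_num, zpow_natCast, zpow_natCast]
        field_simp
    have t4 := t3.congr_of_eventuallyEq hloc.symm
    refine t4.congr_deriv ?_; symm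
    rw [hDdef]
    dsimp only
    have hker : Real.exp (-x^2/2 * s^(-2:ℤ) - s^2/(2*a)) = ker x a s := by
      rw [ker]
      congr 1
      rw [zpow_neg, show ((2:ℤ)) = ((2:ℕ):ℤ) by norm_num, zpow_natCast]
      field_simp
    rw [hker]
    simp only [zpow_neg, zpow_one,
      show ((2:ℤ)) = ((2:ℕ):ℤ) by norm_num, show ((3:ℤ)) = ((3:ℕ):ℤ) by norm_num,
      show ((4:ℤ)) = ((4:ℕ):ℤ) by norm_num, show ((5:ℤ)) = ((5:ℕ):ℤ) by norm_num,
      show ((7:ℤ)) = ((7:ℕ):ℤ) by norm_num, zpow_natCast]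
    field_simp
    ring
  -- integrability of D
  have hi1 := (ker_integrableOn x a hx ha 1).const_mul (1/a^2)
  have hi2 := (ker_integrableOn x a hx ha (-1)).const_mul (1/a)
  have hi3 := (ker_integrableOn x a hx ha (-3)).const_mul 2
  have hi4 := (ker_integrableOn x a hx ha (-5)).const_mul (5*x^2)
  have hi5 := (ker_integrableOn x a hx ha (-7)).const_mul (x^4)
  have hD_int : IntegrableOn D (Ioi (0:ℝ)) := by
    exact (((hi1.sub hi2).sub hi3).add hi4).sub hi5
  -- limit of h at infinity
  have htop : Tendsto h atTop (nhds 0) := by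
    have c1 := ker_tendsto_atTop x a ha (-2)
    have c2 := (ker_tendsto_atTop x a ha (-4)).const_mul (x^2)
    have c3 := (ker_tendsto_atTop x a ha 0).const_mul (1/a)
    have comb := (c1.sub c2).sub c3
    rw [show (0:ℝ) - x^2 * 0 - 1/a * 0 = 0 by ring] at comb
    apply comb.congr'
    filter_upwards [eventually_gt_atTop (0:ℝ)] with s hs
    have hs0 : s ≠ 0 := hs.ne'
    rw [hdef]
    dsimp only
    simp only [zpow_neg, zpow_zero,
      show ((2:ℤ)) = ((2:ℕ):ℤ) by norm_num, show ((4:ℤ)) = ((4:ℕ):ℤ) by norm_num, zpow_natCast]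
    field_simp
  -- continuity at 0 within Ici
  have hcont : ContinuousWithinAt h (Ici (0:ℝ)) 0 := by
    have hlim : Tendsto h (nhdsWithin 0 (Ioi 0)) (nhds 0) := by
      have c1 := ker_tendsto_zero x a hx ha (-2)
      have c2 := (ker_tendsto_zero x a hx ha (-4)).const_mul (x^2)
      have c3 := (ker_tendsto_zero x a hx ha 0).const_mul (1/a)
      have comb := (c1.sub c2).sub c3
      rw [show (0:ℝ) - x^2 * 0 - 1/a * 0 = 0 by ring] at comb
      apply comb.congr'
      filter_upwards [self_mem_nhdsWithin] with s hs
      have hs0 : s ≠ 0 := (mem_Ioi.1 hs).ne'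
      rw [hdef]
      dsimp only
      simp only [zpow_neg, zpow_zero,
        show ((2:ℤ)) = ((2:ℕ):ℤ) by norm_num, show ((4:ℤ)) = ((4:ℕ):ℤ) by norm_num, zpow_natCast]
      field_simp
    show Tendsto h (nhdsWithin 0 (Ici 0)) (nhds (h 0))
    rw [h0, ← Set.Ioi_insert, nhdsWithin_insert]
    apply tendsto_sup.2
    refine ⟨?_, hlim⟩
    have := tendsto_pure_nhds h 0
    rwa [h0] at this
  have main := integral_Ioi_of_hasDerivAt_of_tendsto hcont hderiv hD_int htop
  rw [h0, sub_zero] at main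
  -- split the integral
  have expand : ∫ s in Ioi (0:ℝ), D s
      = (1/a^2) * J x a 1 - (1/a) * J x a (-1) - 2 * J x a (-3)
        + 5*x^2 * J x a (-5) - x^4 * J x a (-7) := by
    have T1 : ∫ s in Ioi (0:ℝ), ((1/a^2)*(s^(1:ℤ) * ker x a s) - (1/a)*(s^(-1:ℤ) * ker x a s))
        = (∫ s in Ioi (0:ℝ), (1/a^2)*(s^(1:ℤ) * ker x a s))
          - ∫ s in Ioi (0:ℝ), (1/a)*(s^(-1:ℤ) * ker x a s) := integral_sub hi1 hi2
    have T2 : ∫ s in Ioi (0:ℝ), ((1/a^2)*(s^(1:ℤ) * ker x a s) - (1/a)*(s^(-1:ℤ) * ker x a s)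
          - 2*(s^(-3:ℤ) * ker x a s))
        = (∫ s in Ioi (0:ℝ), ((1/a^2)*(s^(1:ℤ) * ker x a s) - (1/a)*(s^(-1:ℤ) * ker x a s)))
          - ∫ s in Ioi (0:ℝ), 2*(s^(-3:ℤ) * ker x a s) := integral_sub (hi1.sub hi2) hi3
    have T3 : ∫ s in Ioi (0:ℝ), ((1/a^2)*(s^(1:ℤ) * ker x a s) - (1/a)*(s^(-1:ℤ) * ker x a s)
          - 2*(s^(-3:ℤ) * ker x a s) + 5*x^2*(s^(-5:ℤ) * ker x a s))
        = (∫ s in Ioi (0:ℝ), ((1/a^2)*(s^(1:ℤ) * ker x a s) - (1/a)*(s^(-1:ℤ) * ker x a s)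
          - 2*(s^(-3:ℤ) * ker x a s)))
          + ∫ s in Ioi (0:ℝ), 5*x^2*(s^(-5:ℤ) * ker x a s) :=
      integral_add ((hi1.sub hi2).sub hi3) hi4
    have T4 : ∫ s in Ioi (0:ℝ), ((1/a^2)*(s^(1:ℤ) * ker x a s) - (1/a)*(s^(-1:ℤ) * ker x a s)
          - 2*(s^(-3:ℤ) * ker x a s) + 5*x^2*(s^(-5:ℤ) * ker x a s) - x^4*(s^(-7:ℤ) * ker x a s))
        = (∫ s in Ioi (0:ℝ), ((1/a^2)*(s^(1:ℤ) * ker x a s) - (1/a)*(s^(-1:ℤ) * ker x a s)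
          - 2*(s^(-3:ℤ) * ker x a s) + 5*x^2*(s^(-5:ℤ) * ker x a s)))
          - ∫ s in Ioi (0:ℝ), x^4*(s^(-7:ℤ) * ker x a s) :=
      integral_sub (((hi1.sub hi2).sub hi3).add hi4) hi5
    simp only [hDdef]
    rw [T4, T3, T2, T1, integral_const_mul, integral_const_mul, integral_const_mul,
      integral_const_mul, integral_const_mul]
    rfl
  rw [expand] at main
  exact main



lemma qIF_eq (H x t : ℝ) (ht : 0 < t) :
    qIF H x t = (Real.pi * Real.sqrt (t ^ (2*H)))⁻¹ * J x (t ^ (2*H)) (-1) := by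
  have ha : (0:ℝ) < t ^ (2*H) := Real.rpow_pos_of_pos ht _
  set a := t ^ (2*H) with hadef
  have h2π : (0:ℝ) < 2 * Real.pi := by positivity
  have hsq : Real.sqrt (2*Real.pi) * Real.sqrt (2*Real.pi) = 2*Real.pi :=
    Real.mul_self_sqrt h2π.le
  have hsπ : Real.sqrt (2*Real.pi) ≠ 0 := by positivity
  have hsa : Real.sqrt a ≠ 0 := by positivity
  have hπ : Real.pi ≠ 0 := Real.pi_ne_zero
  have key : (∫ s in Ioi (0:ℝ),
      (Real.exp (-x ^ 2 / (2 * s ^ 2)) / Real.sqrt (2 * Real.pi * s ^ 2)) *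
        (Real.exp (-s ^ 2 / (2 * a)) / Real.sqrt (2 * Real.pi * a)))
      = (2 * Real.pi * Real.sqrt a)⁻¹ * J x a (-1) := by
    rw [J, ← integral_const_mul]
    apply setIntegral_congr_fun measurableSet_Ioi
    intro s hs
    have hsp : (0:ℝ) < s := hs
    have hs0 : s ≠ 0 := hsp.ne'
    have e1 : Real.sqrt (2*Real.pi*s^2) = Real.sqrt (2*Real.pi) * s := by
      rw [show 2*Real.pi*s^2 = (2*Real.pi)*s^2 by ring, Real.sqrt_mul h2π.le,
        Real.sqrt_sq hsp.le]
    have e2 : Real.sqrt (2*Real.pi*a) = Real.sqrt (2*Real.pi) * Real.sqrt a :=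
      Real.sqrt_mul h2π.le a
    dsimp only
    rw [e1, e2, ker_eq, zpow_neg, zpow_one]
    field_simp
    ring_nf
    rw [Real.sq_sqrt (by positivity)]
  rw [qIF, key]
  field_simp


end IFBMaux

open IFBMaux in
/-- the density of the iterated fractional Brownian motion satisfies
`∂q/∂t = −H t^(2H−1) (2 ∂²q/∂x² + x ∂³q/∂x³)` for all `x ≠ 0`, `t > 0`. -/

theorem stmt_17 (H : ℝ) (hH₀ : 0 < H) (hH₁ : H < 1) :
    ∀ x t : ℝ, x ≠ 0 → 0 < t →
      deriv (fun τ => qIF H x τ) t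
        = -(H * t ^ (2 * H - 1)) *
            (2 * deriv (deriv (fun ξ => qIF H ξ t)) x
              + x * deriv (deriv (deriv (fun ξ => qIF H ξ t))) x) := by
  intro x t hx ht
  have ha : (0:ℝ) < t ^ (2*H) := Real.rpow_pos_of_pos ht _
  set a := t ^ (2*H) with hadef
  have hsa : 0 < Real.sqrt a := Real.sqrt_pos.2 ha
  have hπ : (0:ℝ) < Real.pi := Real.pi_pos
  set c := (Real.pi * Real.sqrt a)⁻¹ with hcdef
  have hq_fun : (fun ξ => qIF H ξ t) = fun ξ => c * J ξ a (-1) :=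
    funext fun ξ => qIF_eq H ξ t ht
  -- first x-derivative
  have h1 : ∀ ξ : ℝ, ξ ≠ 0 → HasDerivAt (fun y => c * J y a (-1)) (c * (-ξ * J ξ a (-3))) ξ := by
    intro ξ hξ
    have hb := (hasDerivAt_J_x a ha (-1) ξ hξ).const_mul c
    simpa only [show ((-1:ℤ) - 2) = -3 by norm_num] using hb
  -- second x-derivative
  have h2 : ∀ ξ : ℝ, ξ ≠ 0 → HasDerivAt (fun y => c * (-y * J y a (-3)))
      (c * (-J ξ a (-3) + ξ^2 * J ξ a (-5))) ξ := by
    intro ξ hξ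
    have hb := (((hasDerivAt_id ξ).neg).mul (hasDerivAt_J_x a ha (-3) ξ hξ)).const_mul c
    simp only [show ((-3:ℤ) - 2) = -5 by norm_num, id_eq] at hb
    refine hb.congr_deriv ?_
    simp only [Pi.neg_apply, id_eq]
    ring
  -- third x-derivative
  have h3 : ∀ ξ : ℝ, ξ ≠ 0 → HasDerivAt (fun y => c * (-J y a (-3) + y^2 * J y a (-5)))
      (c * (3*ξ*J ξ a (-5) - ξ^3*J ξ a (-7))) ξ := by
    intro ξ hξ
    have i1 := (hasDerivAt_J_x a ha (-3) ξ hξ).neg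
    have i2 := (hasDerivAt_pow 2 ξ).mul (hasDerivAt_J_x a ha (-5) ξ hξ)
    have hb := (i1.add i2).const_mul c
    simp only [show ((-3:ℤ) - 2) = -5 by norm_num, show ((-5:ℤ) - 2) = -7 by norm_num] at hb
    refine hb.congr_deriv ?_
    push_cast
    ring
  have e1 : ∀ ξ : ℝ, ξ ≠ 0 → deriv (fun y => qIF H y t) ξ = c * (-ξ * J ξ a (-3)) := by
    intro ξ hξ
    rw [hq_fun]
    exact (h1 ξ hξ).deriv
  have e2 : ∀ ξ : ℝ, ξ ≠ 0 → deriv (deriv (fun y => qIF H y t)) ξ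
      = c * (-J ξ a (-3) + ξ^2 * J ξ a (-5)) := by
    intro ξ hξ
    have hev : deriv (fun y => qIF H y t) =ᶠ[nhds ξ] fun y => c * (-y * J y a (-3)) := by
      filter_upwards [IsOpen.mem_nhds isOpen_ne hξ] with y hy
      exact e1 y hy
    rw [hev.deriv_eq]
    exact (h2 ξ hξ).deriv
  have e3 : deriv (deriv (deriv (fun y => qIF H y t))) x
      = c * (3*x*J x a (-5) - x^3*J x a (-7)) := by
    have hev : deriv (deriv (fun y => qIF H y t)) =ᶠ[nhds x]
        fun y => c * (-J y a (-3) + y^2 * J y a (-5)) := by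
      filter_upwards [IsOpen.mem_nhds isOpen_ne hx] with y hy
      exact e2 y hy
    rw [hev.deriv_eq]
    exact (h3 x hx).deriv
  -- t-derivative
  have i1 : HasDerivAt (fun A : ℝ => Real.pi * Real.sqrt A) (Real.pi * (1/(2*Real.sqrt a))) a :=
    (Real.hasDerivAt_sqrt ha.ne').const_mul Real.pi
  have i2 := i1.inv (by positivity)
  have i3 := hasDerivAt_J_a x hx (-1) a ha
  simp only [show ((-1:ℤ) + 2) = 1 by norm_num] at i3
  have hW := i2.mul i3
  have hA : HasDerivAt (fun τ : ℝ => τ ^ (2*H)) (2*H * t^(2*H - 1)) t := by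
    simpa using Real.hasDerivAt_rpow_const (x := t) (p := 2*H) (Or.inl ht.ne')
  have hcomp := HasDerivAt.comp t hW hA
  have hev_t : (fun τ => qIF H x τ) =ᶠ[nhds t]
      fun τ => (Real.pi * Real.sqrt (τ^(2*H)))⁻¹ * J x (τ^(2*H)) (-1) := by
    filter_upwards [IsOpen.mem_nhds isOpen_Ioi (show t ∈ Set.Ioi (0:ℝ) from ht)] with τ hτ
    exact qIF_eq H x τ hτ
  have eLHS : deriv (fun τ => qIF H x τ) t
      = (-(Real.pi * (1/(2*Real.sqrt a))) / (Real.pi * Real.sqrt a)^2 * J x a (-1)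
          + (Real.pi * Real.sqrt a)⁻¹ * ((2*a^2)⁻¹ * J x a 1)) * (2*H*t^(2*H-1)) := by
    rw [hev_t.deriv_eq]
    exact hcomp.deriv
  rw [eLHS, e2 x hx, e3]
  -- now pure algebra
  have hparts := parts x a hx ha
  set J1 := J x a 1
  set Jm1 := J x a (-1)
  set Jm3 := J x a (-3)
  set Jm5 := J x a (-5)
  set Jm7 := J x a (-7)
  have hJ1 : J1 = a*Jm1 + 2*a^2*Jm3 - 5*a^2*x^2*Jm5 + a^2*x^4*Jm7 := by
    field_simp at hparts
    apply mul_left_cancel₀ ha.ne'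
    linear_combination a * hparts
  rw [hJ1, hcdef]
  have hb2 : Real.sqrt a ^ 2 = a := Real.sq_sqrt ha.le
  clear_value a c J1 Jm1 Jm3 Jm5 Jm7
  generalize hbb : Real.sqrt a = b at hb2 hsa ⊢
  subst hb2
  field_simp
  ring
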